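/- Let R be a finite field equipped with the discrete topology, Γ a set with at least two elements, φ: Γ → Γ a map, and w ∈ R^Γ a weight vector. Then the dynamical system (R^Γ, σ_{φ,w}) is Devaney chaotic if and only if φ is injective, φ has no periodic points, and w_α ≠ 0 for every α ∈ Γ. -/

import Mathlib

open Function Set

namespace WGShift

variable {Γ R : Type*}

/-- The basic entourage `O_M` determined by a set of coordinates `M ⊆ Γ`. -/
def shiftOM (M : Set Γ) : Set ((Γ → R) × (Γ → R)) :=
  {p | ∀ α ∈ M, p.1 α = p.2 α}

/-- Entourages of the product uniformity on `Γ → R` (with `R` discrete):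
exactly the sets containing some `O_M` with `M` finite. -/
def IsEntourage (O : Set ((Γ → R) × (Γ → R))) : Prop :=
  ∃ M : Set Γ, M.Finite ∧ shiftOM M ⊆ O

/-- The weighted generalized shift `σ_{φ,w}`. -/
def wshift [Mul R] (φ : Γ → Γ) (w : Γ → R) : (Γ → R) → (Γ → R) :=
  fun x α => w α * x (φ α)

/-- `α` is quasi-periodic under `φ` if `φ^i α = φ^j α` for some `i > j ≥ 1`. -/
def IsQuasiPeriodic (φ : Γ → Γ) (α : Γ) : Prop :=
  ∃ i j : ℕ, 1 ≤ j ∧ j < i ∧ φ^[i] α = φ^[j] α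

/-- Sensitivity of `(R^Γ, f)` with respect to the product uniformity. -/
def Sensitive [TopologicalSpace R] (f : (Γ → R) → (Γ → R)) : Prop :=
  ∃ O : Set ((Γ → R) × (Γ → R)), IsEntourage O ∧
    ∀ x : Γ → R, ∀ U : Set (Γ → R), IsOpen U → x ∈ U →
      ∃ y ∈ U, ∃ n : ℕ, (f^[n] x, f^[n] y) ∉ O

/-- Strong sensitivity of `(R^Γ, f)` with respect to the product uniformity. -/
def StronglySensitive [TopologicalSpace R] (f : (Γ → R) → (Γ → R)) : Prop :=
  ∃ O : Set ((Γ → R) × (Γ → R)), IsEntourage O ∧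
    ∀ x : Γ → R, ∀ U : Set (Γ → R), IsOpen U → x ∈ U →
      ∃ y ∈ U, ∃ N : ℕ, ∀ n ≥ N, (f^[n] x, f^[n] y) ∉ O

/-- `x, y` are proximal for `f`. -/
def ProximalPair (f : (Γ → R) → (Γ → R)) (x y : Γ → R) : Prop :=
  ∀ O : Set ((Γ → R) × (Γ → R)), IsEntourage O →
    ∃ n ≥ 1, (f^[n] x, f^[n] y) ∈ O

/-- `x, y` are asymptotic for `f`. -/
def AsymptoticPair (f : (Γ → R) → (Γ → R)) (x y : Γ → R) : Prop :=
  ∀ O : Set ((Γ → R) × (Γ → R)), IsEntourage O →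
    ∃ N ≥ 1, ∀ n ≥ N, (f^[n] x, f^[n] y) ∈ O

/-- A scrambled pair: proximal but not asymptotic. -/
def ScrambledPair (f : (Γ → R) → (Γ → R)) (x y : Γ → R) : Prop :=
  ProximalPair f x y ∧ ¬ AsymptoticPair f x y

/-- Li–Yorke chaos: existence of an uncountable scrambled set. -/
def LiYorkeChaotic (f : (Γ → R) → (Γ → R)) : Prop :=
  ∃ A : Set (Γ → R), ¬ A.Countable ∧
    ∀ x ∈ A, ∀ y ∈ A, x ≠ y → ScrambledPair f x y

/-- Topological transitivity of `(R^Γ, f)`. -/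
def TopTransitive [TopologicalSpace R] (f : (Γ → R) → (Γ → R)) : Prop :=
  ∀ U V : Set (Γ → R), IsOpen U → IsOpen V → U.Nonempty → V.Nonempty →
    ∃ n ≥ 1, (f^[n] '' U ∩ V).Nonempty

/-- The set of periodic points of `f`. -/
def perPoints (f : (Γ → R) → (Γ → R)) : Set (Γ → R) :=
  {x | ∃ n ≥ 1, f^[n] x = x}

/-- Devaney chaos: sensitive, topologically transitive, dense periodic points. -/
def DevaneyChaotic [TopologicalSpace R] (f : (Γ → R) → (Γ → R)) : Prop :=
  Sensitive f ∧ TopTransitive f ∧ Dense (perPoints f)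

open Classical in
/-- The point `x^A ∈ R^Γ` built from `A ⊆ ℕ` along the orbit of `ν`. -/
noncomputable def xA [Zero R] [One R] (φ : Γ → Γ) (ν : Γ) (A : Set ℕ) : Γ → R :=
  fun α => if ∃ p : ℕ, p ∈ A ∧ α = φ^[p * (p + 1) / 2] ν then 1 else 0

end WGShift

open WGShift

section Aux

variable {Γ R : Type*} [Field R]

/-- The cocycle of weights along the orbit. -/
def Wp (φ : Γ → Γ) (w : Γ → R) (n : ℕ) (α : Γ) : R := ∏ k ∈ Finset.range n, w (φ^[k] α)

variable (φ : Γ → Γ) (w : Γ → R)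

theorem wshift_iterate (n : ℕ) (x : Γ → R) (α : Γ) :
    (wshift φ w)^[n] x α = Wp φ w n α * x (φ^[n] α) := by
  induction n generalizing x with
  | zero => simp [Wp]
  | succ n ih =>
    rw [Function.iterate_succ_apply, ih]
    simp only [Wp, Finset.prod_range_succ, wshift, Function.iterate_succ_apply']
    ring

theorem Wp_zero (α : Γ) : Wp φ w 0 α = 1 := by simp [Wp]

theorem Wp_add (m n : ℕ) (α : Γ) :
    Wp φ w (m + n) α = Wp φ w m α * Wp φ w n (φ^[m] α) := by
  simp only [Wp, Finset.prod_range_add]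
  congr 1
  refine Finset.prod_congr rfl fun k _ => ?_
  rw [← Function.iterate_add_apply, Nat.add_comm]

theorem Wp_ne_zero (hw : ∀ α, w α ≠ 0) (n : ℕ) (α : Γ) : Wp φ w n α ≠ 0 :=
  Finset.prod_ne_zero_iff.mpr fun _ _ => hw _

theorem orbit_inj (hinj : Function.Injective φ)
    (hper : ∀ α : Γ, ∀ n : ℕ, 1 ≤ n → φ^[n] α ≠ α) (α : Γ) {m n : ℕ}
    (h : φ^[m] α = φ^[n] α) : m = n := by
  rcases lt_trichotomy m n with hlt | he | hlt
  · exfalso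
    have h2 : φ^[m + (n - m)] α = φ^[m] α := by rw [Nat.add_sub_cancel' hlt.le]; exact h.symm
    rw [Function.iterate_add_apply] at h2
    exact hper α (n - m) (by omega) ((hinj.iterate m) h2)
  · exact he
  · exfalso
    have h2 : φ^[n + (m - n)] α = φ^[n] α := by rw [Nat.add_sub_cancel' hlt.le]; exact h
    rw [Function.iterate_add_apply] at h2
    exact hper α (m - n) (by omega) ((hinj.iterate n) h2)

theorem exists_good_n (hinj : Function.Injective φ)
    (hper : ∀ α : Γ, ∀ n : ℕ, 1 ≤ n → φ^[n] α ≠ α) (F : Finset Γ) :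
    ∃ n : ℕ, 1 ≤ n ∧ ∀ γ ∈ F, ∀ δ ∈ F, ∀ k : ℕ, 1 ≤ k → φ^[k * n] γ ≠ δ := by
  classical
  set g : Γ × Γ → ℕ := fun p => if h : ∃ m, 1 ≤ m ∧ φ^[m] p.1 = p.2 then h.choose else 0 with hg
  refine ⟨(F ×ˢ F).sup g + 1, by omega, fun γ hγ δ hδ k hk hkn => ?_⟩
  set n := (F ×ˢ F).sup g + 1
  have hex : ∃ m, 1 ≤ m ∧ φ^[m] γ = δ := ⟨k * n, Nat.mul_pos hk (by omega), hkn⟩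
  have hspec := hex.choose_spec
  have : g (γ, δ) = hex.choose := by rw [hg]; simp only [dif_pos hex]
  have heq : hex.choose = k * n := orbit_inj φ hinj hper γ (hspec.2.trans hkn.symm)
  have hle : g (γ, δ) ≤ (F ×ˢ F).sup g := Finset.le_sup (Finset.mem_product.mpr ⟨hγ, hδ⟩)
  have : k * n ≥ n := Nat.le_mul_of_pos_left n hk
  omega

omit [Field R] in
theorem isOpen_coord [TopologicalSpace R] [DiscreteTopology R] (β : Γ) (c : R) :
    IsOpen {y : Γ → R | y β = c} := by
  have h : IsOpen ((fun y : Γ → R => y β) ⁻¹' {c}) :=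
    IsOpen.preimage (continuous_apply β) (isOpen_discrete ({c} : Set R))
  exact h

omit [Field R] in
theorem isOpen_basic [TopologicalSpace R] [DiscreteTopology R] (F : Finset Γ) (x : Γ → R) :
    IsOpen {y : Γ → R | ∀ α ∈ F, y α = x α} := by
  classical
  have : {y : Γ → R | ∀ α ∈ F, y α = x α} = (↑F : Set Γ).pi fun α => {x α} := by
    ext y; simp [Set.mem_pi]
  rw [this]
  exact isOpen_set_pi F.finite_toSet fun _ _ => isOpen_discrete _

omit [Field R] in
theorem exists_basic [TopologicalSpace R] {U : Set (Γ → R)} (hU : IsOpen U) {x : Γ → R}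
    (hx : x ∈ U) : ∃ F : Finset Γ, {y : Γ → R | ∀ α ∈ F, y α = x α} ⊆ U := by
  obtain ⟨I, u, hIu, hsub⟩ := isOpen_pi_iff.mp hU x hx
  exact ⟨I, fun y hy => hsub fun α hα => by
    rw [Set.mem_setOf_eq] at hy; rw [hy α hα]; exact (hIu α hα).2⟩

theorem same_chain (hinj : Function.Injective φ)
    (hper : ∀ α : Γ, ∀ n : ℕ, 1 ≤ n → φ^[n] α ≠ α) {F : Finset Γ} {n : ℕ}
    (hn : ∀ γ ∈ F, ∀ δ ∈ F, ∀ k : ℕ, 1 ≤ k → φ^[k * n] γ ≠ δ)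
    {α γ γ₀ : Γ} (hγ : γ ∈ F) (hγ₀ : γ₀ ∈ F) {i j i₀ j₀ : ℕ}
    (h1 : φ^[i * n] α = φ^[j * n] γ) (h2 : φ^[i₀ * n] α = φ^[j₀ * n] γ₀) :
    γ = γ₀ := by
  have key : φ^[(2 * j + i₀ + j₀) * n] γ = φ^[(i + j + 2 * j₀) * n] γ₀ := by
    have e1 : φ^[j₀ * n + i * n] α = φ^[j₀ * n + j * n] γ := by
      rw [Function.iterate_add_apply, Function.iterate_add_apply, h1]
    have e2 : φ^[j * n + i₀ * n] α = φ^[j * n + j₀ * n] γ₀ := by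
      rw [Function.iterate_add_apply, Function.iterate_add_apply, h2]
    have e3 := congrArg (φ^[j * n + i₀ * n]) e1
    rw [← Function.iterate_add_apply, ← Function.iterate_add_apply] at e3
    have e4 := congrArg (φ^[j₀ * n + i * n]) e2
    rw [← Function.iterate_add_apply, ← Function.iterate_add_apply] at e4
    have h5 : (j * n + i₀ * n) + (j₀ * n + j * n) = (2 * j + i₀ + j₀) * n := by ring
    have h6 : (j₀ * n + i * n) + (j * n + j₀ * n) = (i + j + 2 * j₀) * n := by ring
    have h7 : (j * n + i₀ * n) + (j₀ * n + i * n) = (j₀ * n + i * n) + (j * n + i₀ * n) := by ring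
    rw [h5] at e3; rw [h6] at e4; rw [h7] at e3; rw [e3] at e4; exact e4
  set p := 2 * j + i₀ + j₀
  set q := i + j + 2 * j₀
  rcases lt_trichotomy p q with hlt | he | hlt
  · exfalso
    have hpq : p + (q - p) = q := by omega
    have h8 : φ^[p * n] (φ^[(q - p) * n] γ₀) = φ^[q * n] γ₀ := by
      rw [← Function.iterate_add_apply, ← Nat.add_mul, hpq]
    have : φ^[p * n] γ = φ^[p * n] (φ^[(q - p) * n] γ₀) := by rw [h8, key]
    exact hn γ₀ hγ₀ γ hγ (q - p) (by omega) ((hinj.iterate (p * n)) this).symm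
  · rw [he] at key; exact (hinj.iterate (q * n)) key
  · exfalso
    have hpq : q + (p - q) = p := by omega
    have h8 : φ^[q * n] (φ^[(p - q) * n] γ) = φ^[p * n] γ := by
      rw [← Function.iterate_add_apply, ← Nat.add_mul, hpq]
    have : φ^[q * n] γ₀ = φ^[q * n] (φ^[(p - q) * n] γ) := by rw [h8, ← key]
    exact hn γ hγ γ₀ hγ₀ (p - q) (by omega) ((hinj.iterate (q * n)) this).symm

theorem Wp_cross (hinj : Function.Injective φ)
    (hper : ∀ α : Γ, ∀ n : ℕ, 1 ≤ n → φ^[n] α ≠ α) (hw : ∀ α, w α ≠ 0)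
    {α γ : Γ} {a b a₀ b₀ : ℕ}
    (h1 : φ^[a] α = φ^[b] γ) (h2 : φ^[a₀] α = φ^[b₀] γ) :
    Wp φ w a α * Wp φ w b₀ γ = Wp φ w b γ * Wp φ w a₀ α := by
  have hoff : a + b₀ = a₀ + b := by
    have e1 : φ^[b₀ + a] α = φ^[b₀ + b] γ := by
      rw [Function.iterate_add_apply, Function.iterate_add_apply, h1]
    have e2 : φ^[b + a₀] α = φ^[b + b₀] γ := by
      rw [Function.iterate_add_apply, Function.iterate_add_apply, h2]
    have h3 : φ^[b₀ + a] α = φ^[b + a₀] α := by rw [e1, e2]; congr 1; omega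
    have := orbit_inj φ hinj hper α h3
    omega
  set X := Wp φ w b₀ (φ^[b] γ) with hX
  set Y := Wp φ w b (φ^[b₀] γ) with hY
  have E1 : Wp φ w a α * X = Wp φ w a₀ α * Y := by
    have e1 : Wp φ w (a + b₀) α = Wp φ w a α * X := by rw [Wp_add, h1]
    have e2 : Wp φ w (a₀ + b) α = Wp φ w a₀ α * Y := by rw [Wp_add, h2]
    rw [← e1, ← e2, hoff]
  have E2 : Wp φ w b γ * X = Wp φ w b₀ γ * Y := by
    have e1 : Wp φ w (b + b₀) γ = Wp φ w b γ * X := by rw [Wp_add]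
    have e2 : Wp φ w (b₀ + b) γ = Wp φ w b₀ γ * Y := by rw [Wp_add]
    rw [← e1, ← e2, Nat.add_comm]
  have hXY : X * Y ≠ 0 := mul_ne_zero (Wp_ne_zero φ w hw _ _) (Wp_ne_zero φ w hw _ _)
  apply mul_right_cancel₀ hXY
  linear_combination (Wp φ w b₀ γ * Y) * E1 - (Wp φ w a₀ α * Y) * E2

end Aux

theorem stmt18 {R Γ : Type*} [Field R] [Fintype R]
    [TopologicalSpace R] [DiscreteTopology R] [Nontrivial Γ]
    (φ : Γ → Γ) (w : Γ → R) :
    DevaneyChaotic (wshift φ w) ↔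
      Function.Injective φ ∧ (∀ α : Γ, ∀ n : ℕ, 1 ≤ n → φ^[n] α ≠ α) ∧
        ∀ α : Γ, w α ≠ 0 := by
  classical
  constructor
  · rintro ⟨-, hT, -⟩
    -- (c) first prove all weights nonzero
    have hw : ∀ α : Γ, w α ≠ 0 := by
      intro β hβ
      obtain ⟨n, hn1, z, ⟨u, -, rfl⟩, hzV⟩ :=
        hT Set.univ {y : Γ → R | y β = 1} isOpen_univ (isOpen_coord β 1)
          ⟨0, trivial⟩ ⟨fun _ => 1, rfl⟩
      rw [Set.mem_setOf_eq, wshift_iterate] at hzV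
      have : Wp φ w n β = 0 := by
        refine Finset.prod_eq_zero (Finset.mem_range.mpr (by omega : 0 < n)) ?_
        simpa using hβ
      rw [this, zero_mul] at hzV
      exact one_ne_zero hzV.symm
    refine ⟨?_, ?_, hw⟩
    · -- injectivity
      intro a b hab
      by_contra hne
      have hVopen : IsOpen {y : Γ → R | y a = 1 ∧ y b = 0} := by
        exact (isOpen_coord a 1).inter (isOpen_coord b 0)
      have hVne : ({y : Γ → R | y a = 1 ∧ y b = 0}).Nonempty :=
        ⟨fun γ => if γ = a then 1 else 0, by simp [hne], by simp [Ne.symm hne]⟩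
      obtain ⟨n, hn1, z, ⟨u, -, rfl⟩, hzV⟩ :=
        hT Set.univ _ isOpen_univ hVopen ⟨0, trivial⟩ hVne
      obtain ⟨m, rfl⟩ : ∃ m, n = m + 1 := ⟨n - 1, by omega⟩
      rw [Function.iterate_succ_apply'] at hzV
      obtain ⟨h1, h2⟩ := hzV
      simp only [wshift] at h1 h2
      rw [← hab] at h2
      rcases mul_eq_zero.mp h2 with h | h
      · exact hw b h
      · rw [h, mul_zero] at h1; exact one_ne_zero h1.symm
    · -- no periodic points
      intro α m hm hper
      set S : Finset Γ := Finset.image (fun k => φ^[k] α) (Finset.range m) with hS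
      have hUopen : IsOpen {z : Γ → R | ∀ β ∈ S, z β = (0 : R)} := isOpen_basic S 0
      have hVopen : IsOpen {y : Γ → R | y α = 1} := isOpen_coord α 1
      obtain ⟨n, hn1, z, ⟨u, hu, rfl⟩, hzV⟩ :=
        hT _ _ hUopen hVopen ⟨0, fun _ _ => rfl⟩ ⟨fun _ => 1, rfl⟩
      rw [Set.mem_setOf_eq, wshift_iterate] at hzV
      have hmem : φ^[n] α ∈ S := by
        have hper' : Function.IsPeriodicPt φ m α := hper
        rw [← hper'.iterate_mod_apply n]
        exact Finset.mem_image.mpr ⟨n % m, Finset.mem_range.mpr (Nat.mod_lt _ (by omega)), rfl⟩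
      rw [hu _ hmem, mul_zero] at hzV
      exact one_ne_zero hzV.symm
  · rintro ⟨hinj, hper, hw⟩
    obtain ⟨β₀, -, -⟩ := exists_pair_ne Γ
    refine ⟨?_, ?_, ?_⟩
    · -- Sensitive
      refine ⟨shiftOM {β₀}, ⟨{β₀}, Set.finite_singleton _, subset_rfl⟩, fun x U hU hx => ?_⟩
      obtain ⟨F, hF⟩ := exists_basic hU hx
      have : ∃ n : ℕ, φ^[n] β₀ ∉ F := by
        by_contra hall
        push_neg at hall
        obtain ⟨m, n, hmn, he⟩ := Finite.exists_ne_map_eq_of_infinite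
          (fun n : ℕ => (⟨φ^[n] β₀, hall n⟩ : {a // a ∈ F}))
        exact hmn (orbit_inj φ hinj hper β₀ (Subtype.ext_iff.mp he))
      obtain ⟨n, hn⟩ := this
      refine ⟨Function.update x (φ^[n] β₀) (x (φ^[n] β₀) + 1),
        hF fun α hα => Function.update_of_ne (fun he => hn (by rw [← he]; exact hα)) _ _,
        n, fun hO => ?_⟩
      have h9 : (wshift φ w)^[n] x β₀
          = (wshift φ w)^[n] (Function.update x (φ^[n] β₀) (x (φ^[n] β₀) + 1)) β₀ :=
        hO β₀ rfl
      rw [wshift_iterate, wshift_iterate, Function.update_self] at h9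
      have hWn := Wp_ne_zero φ w hw n β₀
      have := mul_left_cancel₀ hWn h9
      simp at this
    · -- TopTransitive
      intro U V hU hV ⟨x, hx⟩ ⟨y, hy⟩
      obtain ⟨F₁, hF₁⟩ := exists_basic hU hx
      obtain ⟨F₂, hF₂⟩ := exists_basic hV hy
      obtain ⟨n, hn1, hn⟩ := exists_good_n φ hinj hper (F₁ ∪ F₂)
      set z : Γ → R := fun α =>
        if α ∈ F₁ then x α
        else if h : ∃ β, β ∈ F₂ ∧ φ^[n] β = α then (Wp φ w n h.choose)⁻¹ * y h.choose
        else 0 with hz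
      have hzU : z ∈ U := hF₁ fun α hα => by rw [hz]; simp only [if_pos hα]
      refine ⟨n, hn1, (wshift φ w)^[n] z, ⟨z, hzU, rfl⟩, hF₂ fun γ hγ => ?_⟩
      rw [wshift_iterate]
      have hnotF₁ : φ^[n] γ ∉ F₁ := fun hmem => by
        have := hn γ (Finset.mem_union_right _ hγ) (φ^[n] γ) (Finset.mem_union_left _ hmem) 1 le_rfl
        rw [one_mul] at this; exact this rfl
      have hex : ∃ β, β ∈ F₂ ∧ φ^[n] β = φ^[n] γ := ⟨γ, hγ, rfl⟩
      have hch : hex.choose = γ := (hinj.iterate n) hex.choose_spec.2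
      rw [hz]
      simp only [if_neg hnotF₁, dif_pos hex, hch]
      rw [← mul_assoc, mul_inv_cancel₀ (Wp_ne_zero φ w hw n γ), one_mul]
    · -- Dense periodic points
      rw [dense_iff_inter_open]
      rintro U hU ⟨x, hx⟩
      obtain ⟨F, hF⟩ := exists_basic hU hx
      obtain ⟨n, hn1, hn⟩ := exists_good_n φ hinj hper F
      set P : Γ → Prop := fun α => ∃ γ, γ ∈ F ∧ ∃ i j : ℕ, φ^[i * n] α = φ^[j * n] γ with hP
      have exists_c : ∀ α, P α → ∃ c : R, ∀ γ ∈ F, ∀ i j : ℕ,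
          φ^[i * n] α = φ^[j * n] γ → Wp φ w (j * n) γ * c = Wp φ w (i * n) α * x γ := by
        rintro α ⟨γ₀, hγ₀, i₀, j₀, h₀⟩
        refine ⟨(Wp φ w (j₀ * n) γ₀)⁻¹ * (Wp φ w (i₀ * n) α * x γ₀), fun γ hγ i j hrep => ?_⟩
        obtain rfl : γ = γ₀ := same_chain φ hinj hper hn hγ hγ₀ hrep h₀
        have K := Wp_cross φ w hinj hper hw hrep h₀
        have hD := Wp_ne_zero φ w hw (j₀ * n) γ
        calc Wp φ w (j * n) γ * ((Wp φ w (j₀ * n) γ)⁻¹ * (Wp φ w (i₀ * n) α * x γ))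
            = (Wp φ w (j * n) γ * Wp φ w (i₀ * n) α) * (Wp φ w (j₀ * n) γ)⁻¹ * x γ := by
              ring
          _ = (Wp φ w (i * n) α * Wp φ w (j₀ * n) γ) * (Wp φ w (j₀ * n) γ)⁻¹ * x γ := by
              rw [← K]
          _ = Wp φ w (i * n) α * x γ := by field_simp
      set y : Γ → R := fun α => if h : P α then (exists_c α h).choose else 0 with hy
      have spec : ∀ α (_ : P α), ∀ γ ∈ F, ∀ i j : ℕ,
          φ^[i * n] α = φ^[j * n] γ → Wp φ w (j * n) γ * y α = Wp φ w (i * n) α * x γ := by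
        intro α hPα γ hγ i j hrep
        rw [hy]; simp only [dif_pos hPα]
        exact (exists_c α hPα).choose_spec γ hγ i j hrep
      have hyF : ∀ γ ∈ F, y γ = x γ := by
        intro γ hγ
        have h0 : φ^[0 * n] γ = φ^[0 * n] γ := rfl
        have := spec γ ⟨γ, hγ, 0, 0, h0⟩ γ hγ 0 0 h0
        rwa [Nat.zero_mul, Wp_zero, one_mul, one_mul] at this
      have hyU : y ∈ U := hF hyF
      have hyper : (wshift φ w)^[n] y = y := by
        funext α
        rw [wshift_iterate]
        by_cases hPα : P α
        · obtain ⟨γ, hγ, i, j, hrep⟩ := hPα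
          have rep1 : φ^[(i + 1) * n] α = φ^[(j + 1) * n] γ := by
            have := congrArg (φ^[n]) hrep
            rw [← Function.iterate_add_apply, ← Function.iterate_add_apply] at this
            have e1 : n + i * n = (i + 1) * n := by ring
            have e2 : n + j * n = (j + 1) * n := by ring
            rwa [e1, e2] at this
          have rep2 : φ^[i * n] (φ^[n] α) = φ^[(j + 1) * n] γ := by
            rw [← Function.iterate_add_apply, ← rep1]
            congr 1; ring
          have hPφ : P (φ^[n] α) := ⟨γ, hγ, i, j + 1, rep2⟩
          have spec1 := spec α ⟨γ, hγ, i + 1, j + 1, rep1⟩ γ hγ (i + 1) (j + 1) rep1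
          have spec2 := spec (φ^[n] α) hPφ γ hγ i (j + 1) rep2
          have hcoc : Wp φ w ((i + 1) * n) α = Wp φ w n α * Wp φ w (i * n) (φ^[n] α) := by
            have e1 : (i + 1) * n = n + i * n := by ring
            rw [e1, Wp_add]
          have hD := Wp_ne_zero φ w hw ((j + 1) * n) γ
          apply mul_left_cancel₀ hD
          calc Wp φ w ((j + 1) * n) γ * (Wp φ w n α * y (φ^[n] α))
              = Wp φ w n α * (Wp φ w ((j + 1) * n) γ * y (φ^[n] α)) := by ring
            _ = Wp φ w n α * (Wp φ w (i * n) (φ^[n] α) * x γ) := by rw [spec2]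
            _ = Wp φ w ((i + 1) * n) α * x γ := by rw [hcoc]; ring
            _ = Wp φ w ((j + 1) * n) γ * y α := spec1.symm
        · have hPφ : ¬ P (φ^[n] α) := by
            rintro ⟨γ, hγ, i, j, hrep⟩
            refine hPα ⟨γ, hγ, i + 1, j, ?_⟩
            rw [← hrep, ← Function.iterate_add_apply]
            congr 1; ring
          rw [hy]
          simp only [dif_neg hPα, dif_neg hPφ, mul_zero]
      exact ⟨y, hyU, n, hn1, hyper⟩
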